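/- The Airy function Ai is twice differentiable on ℝ and satisfies the Airy differential equation Ai''(u) = u · Ai(u) for every u ∈ ℝ. -/

import Mathlib

open Filter Real

/-- The Airy function, defined for real `u` by the improper integral
`Ai(u) = (1/π) ∫₀^∞ cos(t³/3 + u t) dt`, understood as the limit of
`∫₀^R cos(t³/3 + u t) dt` as `R → ∞`. -/
noncomputable def Ai (u : ℝ) : ℝ :=
  (1 / Real.pi) *
    limUnder Filter.atTop
      (fun R : ℝ => ∫ t in (0:ℝ)..R, Real.cos (t ^ 3 / 3 + u * t))

open MeasureTheory intervalIntegral Set Topology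

lemma hasDerivAt_phi (y t : ℝ) : HasDerivAt (fun t : ℝ => t ^ 3 / 3 + y * t) (t ^ 2 + y) t := by
  have h1 : HasDerivAt (fun t : ℝ => t ^ 3 / 3) (t ^ 2) t := by
    have := (hasDerivAt_pow 3 t).div_const 3
    norm_num at this
    simpa [mul_comm, mul_div_assoc] using this
  have h2 : HasDerivAt (fun s : ℝ => y * s) y t := by
    simpa using (hasDerivAt_id t).const_mul y
  exact h1.add h2

lemma hasDerivAt_sinphi (y t : ℝ) :
    HasDerivAt (fun t : ℝ => Real.sin (t ^ 3 / 3 + y * t))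
      ((t ^ 2 + y) * Real.cos (t ^ 3 / 3 + y * t)) t := by
  simpa [mul_comm, Function.comp_def] using (Real.hasDerivAt_sin (t ^ 3 / 3 + y * t)).comp t (hasDerivAt_phi y t)

lemma hasDerivAt_cosphi (y t : ℝ) :
    HasDerivAt (fun t : ℝ => Real.cos (t ^ 3 / 3 + y * t))
      (-((t ^ 2 + y) * Real.sin (t ^ 3 / 3 + y * t))) t := by
  have := (Real.hasDerivAt_cos (t ^ 3 / 3 + y * t)).comp t (hasDerivAt_phi y t)
  simpa [mul_comm, Function.comp_def] using this

lemma tail_cos {M a b y : ℝ} (hy : |y| ≤ M) (h1 : 1 ≤ a) (hM : 2 * M ≤ a ^ 2) (hab : a ≤ b) :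
    |∫ t in a..b, Real.cos (t ^ 3 / 3 + y * t)| ≤ 10 / a := by
  have ha0 : (0:ℝ) < a := lt_of_lt_of_le one_pos h1
  have hyM := abs_le.1 hy
  have key : ∀ t : ℝ, a ≤ t → t ^ 2 / 2 ≤ t ^ 2 + y ∧ 0 < t ^ 2 + y := by
    intro t ht
    have h2 : a ^ 2 ≤ t ^ 2 := by nlinarith
    exact ⟨by nlinarith, by nlinarith⟩
  have hIcc : uIcc a b = Icc a b := uIcc_of_le hab
  set u : ℝ → ℝ := fun t => (t ^ 2 + y)⁻¹ with hu
  set v : ℝ → ℝ := fun t => Real.sin (t ^ 3 / 3 + y * t) with hv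
  set u' : ℝ → ℝ := fun t => -(2 * t) / (t ^ 2 + y) ^ 2 with hu'
  set v' : ℝ → ℝ := fun t => (t ^ 2 + y) * Real.cos (t ^ 3 / 3 + y * t) with hv'
  have hud : ∀ t ∈ uIcc a b, HasDerivAt u (u' t) t := by
    intro t ht
    rw [hIcc] at ht
    have hne : t ^ 2 + y ≠ 0 := ne_of_gt (key t ht.1).2
    have := ((hasDerivAt_pow 2 t).add_const y).inv hne
    simpa [u, u', Pi.inv_def] using this
  have hvd : ∀ t ∈ uIcc a b, HasDerivAt v (v' t) t := fun t _ => hasDerivAt_sinphi y t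
  have hcontden : ∀ t ∈ uIcc a b, (t ^ 2 + y) ≠ 0 := by
    intro t ht; rw [hIcc] at ht; exact ne_of_gt (key t ht.1).2
  have hu'i : IntervalIntegrable u' volume a b := by
    apply ContinuousOn.intervalIntegrable
    apply ContinuousOn.div (by fun_prop) (by fun_prop)
    intro t ht; exact pow_ne_zero 2 (hcontden t ht)
  have hv'i : IntervalIntegrable v' volume a b := by
    apply ContinuousOn.intervalIntegrable; fun_prop
  have ibp := integral_mul_deriv_eq_deriv_mul hud hvd hu'i hv'i
  have hcongr : (∫ t in a..b, Real.cos (t ^ 3 / 3 + y * t)) = ∫ t in a..b, u t * v' t := by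
    apply integral_congr
    intro t ht
    have hne := hcontden t ht
    simp only [u, v']
    rw [inv_mul_cancel_left₀ hne]
  -- bound the boundary terms
  have hbd : ∀ t : ℝ, a ≤ t → |u t * v t| ≤ 2 / a ^ 2 := by
    intro t ht
    have hk := key t ht
    have ht2 : a ^ 2 ≤ t ^ 2 := by nlinarith
    have h1' : |u t| ≤ 2 / a ^ 2 := by
      rw [abs_of_pos (inv_pos.2 hk.2)]
      have h2' : (t ^ 2 + y)⁻¹ ≤ (a ^ 2 / 2)⁻¹ :=
        inv_anti₀ (by positivity) (by nlinarith)
      simpa [inv_div] using h2'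
    calc |u t * v t| = |u t| * |v t| := abs_mul _ _
      _ ≤ (2 / a ^ 2) * 1 :=
          mul_le_mul h1' (abs_sin_le_one _) (abs_nonneg _) (by positivity)
      _ = 2 / a ^ 2 := mul_one _
  -- bound the integral term
  have hIb : |∫ t in a..b, u' t * v t| ≤ 4 / a ^ 2 := by
    have hw : ∀ t ∈ Set.uIcc a b, HasDerivAt (fun s : ℝ => -4 / s ^ 2) (8 / t ^ 3) t := by
      intro t ht
      rw [hIcc] at ht
      have htne : t ≠ 0 := ne_of_gt (lt_of_lt_of_le ha0 ht.1)
      have := ((hasDerivAt_pow 2 t).inv (pow_ne_zero 2 htne)).const_mul (-4 : ℝ)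
      have heq : (fun s : ℝ => -4 * (s ^ 2)⁻¹) = fun s : ℝ => -4 / s ^ 2 := by
        funext s; rw [div_eq_mul_inv]
      simp only [Pi.inv_apply] at this
      rw [heq] at this
      refine this.congr_deriv ?_
      field_simp
      ring
    have hgi : IntervalIntegrable (fun t : ℝ => 8 / t ^ 3) volume a b := by
      apply ContinuousOn.intervalIntegrable
      apply ContinuousOn.div continuousOn_const (by fun_prop)
      intro t ht; rw [hIcc] at ht
      exact pow_ne_zero 3 (ne_of_gt (lt_of_lt_of_le ha0 ht.1))
    have hval : (∫ t in a..b, 8 / t ^ 3) = -4 / b ^ 2 - -4 / a ^ 2 :=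
      integral_eq_sub_of_hasDerivAt hw hgi
    have hnb : ‖∫ t in a..b, u' t * v t‖ ≤ |∫ t in a..b, 8 / t ^ 3| := by
      apply norm_integral_le_abs_of_norm_le _ hgi
      rw [uIoc_of_le hab]
      filter_upwards [ae_restrict_mem measurableSet_Ioc] with t ht
      have hta : a ≤ t := le_of_lt ht.1
      have hk := key t hta
      have ht0 : 0 < t := lt_of_lt_of_le ha0 hta
      have h4 : t ^ 4 / 4 ≤ (t ^ 2 + y) ^ 2 := by
        have hm := mul_le_mul hk.1 hk.1 (by positivity) (le_of_lt hk.2)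
        nlinarith
      have hb1 : |u' t| ≤ 8 / t ^ 3 := by
        rw [hu']
        rw [abs_div, abs_neg, abs_of_nonneg (by positivity : (0:ℝ) ≤ 2 * t),
          abs_of_pos (pow_pos hk.2 2)]
        rw [div_le_div_iff₀ (pow_pos hk.2 2) (by positivity)]
        nlinarith
      calc ‖u' t * v t‖ = |u' t| * |v t| := abs_mul _ _
        _ ≤ (8 / t ^ 3) * 1 :=
            mul_le_mul hb1 (abs_sin_le_one _) (abs_nonneg _) (by positivity)
        _ = 8 / t ^ 3 := mul_one _
    rw [hval] at hnb
    refine le_trans hnb ?_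
    have hb0 : (0:ℝ) < b := lt_of_lt_of_le ha0 hab
    have h1' : 4 / b ^ 2 ≤ 4 / a ^ 2 :=
      div_le_div_of_nonneg_left (by norm_num) (by positivity) (by nlinarith)
    have hb2 : (0:ℝ) < 4 / b ^ 2 := by positivity
    have he : -4 / b ^ 2 - -4 / a ^ 2 = 4 / a ^ 2 - 4 / b ^ 2 := by ring
    rw [he, abs_of_nonneg (by linarith)]
    linarith
  -- combine
  rw [hcongr, ibp]
  have hfin : 2 / a ^ 2 + 2 / a ^ 2 + 4 / a ^ 2 ≤ 10 / a := by
    rw [← add_div, ← add_div]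
    rw [div_le_div_iff₀ (by positivity) ha0]
    nlinarith
  calc |u b * v b - u a * v a - ∫ t in a..b, u' t * v t|
      ≤ |u b * v b - u a * v a| + |∫ t in a..b, u' t * v t| := abs_sub _ _
    _ ≤ |u b * v b| + |u a * v a| + |∫ t in a..b, u' t * v t| :=
        add_le_add_left (abs_sub _ _) _
    _ ≤ 2 / a ^ 2 + 2 / a ^ 2 + 4 / a ^ 2 :=
        add_le_add (add_le_add (hbd b hab) (hbd a le_rfl)) hIb
    _ ≤ 10 / a := hfin

set_option maxHeartbeats 1000000 in
lemma tail_sin {M a b y : ℝ} (hy : |y| ≤ M) (h1 : 1 ≤ a) (hM : 2 * M ≤ a ^ 2) (hab : a ≤ b) :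
    |∫ t in a..b, t * Real.sin (t ^ 3 / 3 + y * t)| ≤ 10 / a := by
  have ha0 : (0:ℝ) < a := lt_of_lt_of_le one_pos h1
  have hyM := abs_le.1 hy
  have key : ∀ t : ℝ, a ≤ t → t ^ 2 / 2 ≤ t ^ 2 + y ∧ 0 < t ^ 2 + y := by
    intro t ht
    have h2 : a ^ 2 ≤ t ^ 2 := by nlinarith
    exact ⟨by nlinarith, by nlinarith⟩
  have hIcc : uIcc a b = Icc a b := uIcc_of_le hab
  set u : ℝ → ℝ := fun t => t * (t ^ 2 + y)⁻¹ with hu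
  set v : ℝ → ℝ := fun t => -Real.cos (t ^ 3 / 3 + y * t) with hv
  set u' : ℝ → ℝ := fun t => (y - t ^ 2) / (t ^ 2 + y) ^ 2 with hu'
  set v' : ℝ → ℝ := fun t => (t ^ 2 + y) * Real.sin (t ^ 3 / 3 + y * t) with hv'
  have hud : ∀ t ∈ uIcc a b, HasDerivAt u (u' t) t := by
    intro t ht
    rw [hIcc] at ht
    have hne : t ^ 2 + y ≠ 0 := ne_of_gt (key t ht.1).2
    have := (hasDerivAt_id t).mul (((hasDerivAt_pow 2 t).add_const y).inv hne)
    simp only [Pi.mul_def, Pi.inv_def, id] at this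
    refine this.congr_deriv ?_
    rw [hu']
    field_simp
    ring
  have hvd : ∀ t ∈ uIcc a b, HasDerivAt v (v' t) t := by
    intro t _
    have := (hasDerivAt_cosphi y t).neg
    simpa [v, v', Pi.neg_def] using this
  have hcontden : ∀ t ∈ uIcc a b, (t ^ 2 + y) ≠ 0 := by
    intro t ht; rw [hIcc] at ht; exact ne_of_gt (key t ht.1).2
  have hu'i : IntervalIntegrable u' volume a b := by
    apply ContinuousOn.intervalIntegrable
    apply ContinuousOn.div (by fun_prop) (by fun_prop)
    intro t ht; exact pow_ne_zero 2 (hcontden t ht)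
  have hv'i : IntervalIntegrable v' volume a b := by
    apply ContinuousOn.intervalIntegrable; fun_prop
  have ibp := integral_mul_deriv_eq_deriv_mul hud hvd hu'i hv'i
  have hcongr : (∫ t in a..b, t * Real.sin (t ^ 3 / 3 + y * t)) = ∫ t in a..b, u t * v' t := by
    apply integral_congr
    intro t ht
    have hne := hcontden t ht
    simp only [u, v']
    field_simp
  have hbd : ∀ t : ℝ, a ≤ t → |u t * v t| ≤ 2 / a := by
    intro t ht
    have hk := key t ht
    have ht0 : 0 < t := lt_of_lt_of_le ha0 ht
    have h1' : |u t| ≤ 2 / a := by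
      have he : u t = t / (t ^ 2 + y) := by simp [hu, div_eq_mul_inv]
      rw [he, abs_div, abs_of_pos ht0, abs_of_pos hk.2, div_le_div_iff₀ hk.2 ha0]
      nlinarith
    calc |u t * v t| = |u t| * |v t| := abs_mul _ _
      _ ≤ (2 / a) * 1 := by
          refine mul_le_mul h1' ?_ (abs_nonneg _) (by positivity)
          simp only [hv, abs_neg]
          exact abs_cos_le_one _
      _ = 2 / a := mul_one _
  have hIb : |∫ t in a..b, u' t * v t| ≤ 6 / a := by
    have hw : ∀ t ∈ Set.uIcc a b, HasDerivAt (fun s : ℝ => -6 / s) (6 / t ^ 2) t := by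
      intro t ht
      rw [hIcc] at ht
      have htne : t ≠ 0 := ne_of_gt (lt_of_lt_of_le ha0 ht.1)
      have := (hasDerivAt_inv htne).const_mul (-6 : ℝ)
      have heq : (fun s : ℝ => -6 * s⁻¹) = fun s : ℝ => -6 / s := by
        funext s; rw [div_eq_mul_inv]
      rw [heq] at this
      refine this.congr_deriv ?_
      field_simp
    have hgi : IntervalIntegrable (fun t : ℝ => 6 / t ^ 2) volume a b := by
      apply ContinuousOn.intervalIntegrable
      apply ContinuousOn.div continuousOn_const (by fun_prop)
      intro t ht; rw [hIcc] at ht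
      exact pow_ne_zero 2 (ne_of_gt (lt_of_lt_of_le ha0 ht.1))
    have hval : (∫ t in a..b, 6 / t ^ 2) = -6 / b - -6 / a :=
      integral_eq_sub_of_hasDerivAt hw hgi
    have hnb : ‖∫ t in a..b, u' t * v t‖ ≤ |∫ t in a..b, 6 / t ^ 2| := by
      apply norm_integral_le_abs_of_norm_le _ hgi
      rw [uIoc_of_le hab]
      filter_upwards [ae_restrict_mem measurableSet_Ioc] with t ht
      have hta : a ≤ t := le_of_lt ht.1
      have hk := key t hta
      have ht0 : 0 < t := lt_of_lt_of_le ha0 hta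
      have hta2 : a ^ 2 ≤ t ^ 2 := by nlinarith
      have h4 : t ^ 4 / 4 ≤ (t ^ 2 + y) ^ 2 := by
        have hm := mul_le_mul hk.1 hk.1 (by positivity) (le_of_lt hk.2)
        nlinarith
      have hb1 : |u' t| ≤ 6 / t ^ 2 := by
        rw [hu']
        rw [abs_div, abs_of_pos (pow_pos hk.2 2)]
        rw [div_le_div_iff₀ (pow_pos hk.2 2) (pow_pos ht0 2)]
        have habs : |y - t ^ 2| ≤ 3 / 2 * t ^ 2 := by
          rw [abs_le]
          constructor <;> nlinarith
        have hmm := mul_le_mul_of_nonneg_right habs (pow_nonneg ht0.le 2)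
        nlinarith [hmm, h4]
      calc ‖u' t * v t‖ = |u' t| * |v t| := abs_mul _ _
        _ ≤ (6 / t ^ 2) * 1 := by
            refine mul_le_mul hb1 ?_ (abs_nonneg _)
              (le_of_lt (div_pos (by norm_num) (pow_pos ht0 2)))
            simp only [hv, abs_neg]
            exact abs_cos_le_one _
        _ = 6 / t ^ 2 := mul_one _
    rw [hval] at hnb
    refine le_trans hnb ?_
    have hb0 : (0:ℝ) < b := lt_of_lt_of_le ha0 hab
    have h1' : 6 / b ≤ 6 / a := div_le_div_of_nonneg_left (by norm_num) ha0 hab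
    have hb2 : (0:ℝ) < 6 / b := by positivity
    have he : -6 / b - -6 / a = 6 / a - 6 / b := by ring
    rw [he, abs_of_nonneg (by linarith)]
    linarith
  rw [hcongr, ibp]
  have hfin : 2 / a + 2 / a + 6 / a ≤ 10 / a := by
    rw [← add_div, ← add_div]
    norm_num
  calc |u b * v b - u a * v a - ∫ t in a..b, u' t * v t|
      ≤ |u b * v b - u a * v a| + |∫ t in a..b, u' t * v t| := abs_sub _ _
    _ ≤ |u b * v b| + |u a * v a| + |∫ t in a..b, u' t * v t| :=
        add_le_add_left (abs_sub _ _) _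
    _ ≤ 2 / a + 2 / a + 6 / a :=
        add_le_add (add_le_add (hbd b hab) (hbd a le_rfl)) hIb
    _ ≤ 10 / a := hfin

noncomputable def Pp (y R : ℝ) : ℝ := ∫ t in (0:ℝ)..R, Real.cos (t ^ 3 / 3 + y * t)
noncomputable def Qq (y R : ℝ) : ℝ := ∫ t in (0:ℝ)..R, -(t * Real.sin (t ^ 3 / 3 + y * t))
noncomputable def Ff (y : ℝ) : ℝ := limUnder atTop (Pp y)
noncomputable def Gg (y : ℝ) : ℝ := limUnder atTop (Qq y)

lemma intInt_cos (y a b : ℝ) :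
    IntervalIntegrable (fun t : ℝ => Real.cos (t ^ 3 / 3 + y * t)) volume a b :=
  (by fun_prop : Continuous fun t : ℝ => Real.cos (t ^ 3 / 3 + y * t)).intervalIntegrable a b

lemma intInt_sin (y a b : ℝ) :
    IntervalIntegrable (fun t : ℝ => -(t * Real.sin (t ^ 3 / 3 + y * t))) volume a b :=
  (by fun_prop : Continuous fun t : ℝ => -(t * Real.sin (t ^ 3 / 3 + y * t))).intervalIntegrable a b

lemma Pp_sub (y R1 R2 : ℝ) :
    Pp y R2 - Pp y R1 = ∫ t in R1..R2, Real.cos (t ^ 3 / 3 + y * t) := by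
  have := integral_add_adjacent_intervals (intInt_cos y 0 R1) (intInt_cos y R1 R2)
  rw [Pp, Pp]
  linarith [this]

lemma Qq_sub (y R1 R2 : ℝ) :
    Qq y R2 - Qq y R1 = ∫ t in R1..R2, -(t * Real.sin (t ^ 3 / 3 + y * t)) := by
  have := integral_add_adjacent_intervals (intInt_sin y 0 R1) (intInt_sin y R1 R2)
  rw [Qq, Qq]
  linarith [this]

lemma tail_bound_P {M a b y : ℝ} (hy : |y| ≤ M) (h1 : 1 ≤ a) (hM : 2 * M ≤ a ^ 2)
    (hab : a ≤ b) : |Pp y b - Pp y a| ≤ 10 / a := by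
  rw [Pp_sub]
  exact tail_cos hy h1 hM hab

lemma tail_bound_Q {M a b y : ℝ} (hy : |y| ≤ M) (h1 : 1 ≤ a) (hM : 2 * M ≤ a ^ 2)
    (hab : a ≤ b) : |Qq y b - Qq y a| ≤ 10 / a := by
  rw [Qq_sub, intervalIntegral.integral_neg, abs_neg]
  exact tail_sin hy h1 hM hab

lemma aux_N {y N : ℝ} (hN : 2 * (1 + |y|) ≤ N) : 1 ≤ N ∧ 2 * |y| ≤ N ^ 2 := by
  have h0 : 0 ≤ |y| := abs_nonneg y
  constructor
  · linarith
  · nlinarith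

lemma cauchy_of_tail {f : ℝ → ℝ} {y : ℝ}
    (h : ∀ a b : ℝ, 1 ≤ a → 2 * |y| ≤ a ^ 2 → a ≤ b → |f b - f a| ≤ 10 / a) :
    CauchySeq f := by
  rw [Metric.cauchySeq_iff']
  intro ε hε
  refine ⟨max (2 * (1 + |y|)) (20 / ε), fun n hn => ?_⟩
  set N := max (2 * (1 + |y|)) (20 / ε) with hNdef
  have hN1 := aux_N (le_max_left (2 * (1 + |y|)) (20 / ε))
  have h20 : 20 / ε ≤ N := le_max_right _ _
  have hN0 : 0 < N := lt_of_lt_of_le one_pos hN1.1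
  have hb := h N n hN1.1 hN1.2 hn
  rw [Real.dist_eq]
  refine lt_of_le_of_lt hb ?_
  have hε2 : 0 < 20 / ε := by positivity
  have : 10 / N ≤ 10 / (20 / ε) := div_le_div_of_nonneg_left (by norm_num) hε2 h20
  refine lt_of_le_of_lt this ?_
  rw [div_div_eq_mul_div]
  linarith [hε]

lemma tendsto_P (y : ℝ) : Tendsto (Pp y) atTop (𝓝 (Ff y)) := by
  have hc : CauchySeq (Pp y) :=
    cauchy_of_tail (fun a b h1 h2 hab => tail_bound_P (le_refl |y|) h1 h2 hab)
  obtain ⟨L, hL⟩ := cauchySeq_tendsto_of_complete hc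
  have he : Ff y = L := hL.limUnder_eq
  rwa [he]

lemma tendsto_Q (y : ℝ) : Tendsto (Qq y) atTop (𝓝 (Gg y)) := by
  have hc : CauchySeq (Qq y) :=
    cauchy_of_tail (fun a b h1 h2 hab => tail_bound_Q (le_refl |y|) h1 h2 hab)
  obtain ⟨L, hL⟩ := cauchySeq_tendsto_of_complete hc
  have he : Gg y = L := hL.limUnder_eq
  rwa [he]

lemma dist_P_le {M y R : ℝ} (hy : |y| ≤ M) (h1 : 1 ≤ R) (hM : 2 * M ≤ R ^ 2) :
    |Ff y - Pp y R| ≤ 10 / R := by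
  have ht : Tendsto (fun b => |Pp y b - Pp y R|) atTop (𝓝 |Ff y - Pp y R|) :=
    (((tendsto_P y).sub tendsto_const_nhds).abs)
  refine le_of_tendsto ht ?_
  filter_upwards [eventually_ge_atTop R] with b hb
  exact tail_bound_P hy h1 hM hb

lemma dist_Q_le {M y R : ℝ} (hy : |y| ≤ M) (h1 : 1 ≤ R) (hM : 2 * M ≤ R ^ 2) :
    |Gg y - Qq y R| ≤ 10 / R := by
  have ht : Tendsto (fun b => |Qq y b - Qq y R|) atTop (𝓝 |Gg y - Qq y R|) :=
    (((tendsto_Q y).sub tendsto_const_nhds).abs)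
  refine le_of_tendsto ht ?_
  filter_upwards [eventually_ge_atTop R] with b hb
  exact tail_bound_Q hy h1 hM hb

lemma unif_P {K : Set ℝ} (hK : IsCompact K) :
    TendstoUniformlyOn (fun R y => Pp y R) Ff atTop K := by
  obtain ⟨M, hM⟩ := hK.isBounded.subset_closedBall 0
  have hM' : ∀ y ∈ K, |y| ≤ M := by
    intro y hy
    have := hM hy
    rwa [Metric.mem_closedBall, Real.dist_eq, sub_zero] at this
  rw [Metric.tendstoUniformlyOn_iff]
  intro ε hε
  filter_upwards [eventually_ge_atTop (max (1 + 2 * M) (20 / ε))] with R hR y hy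
  have h1 : 1 + 2 * M ≤ R := le_trans (le_max_left _ _) hR
  have h2 : 20 / ε ≤ R := le_trans (le_max_right _ _) hR
  have hMy := hM' y hy
  have hM0 : 0 ≤ M := le_trans (abs_nonneg y) hMy
  have hR1 : 1 ≤ R := by linarith
  have hR2 : 2 * M ≤ R ^ 2 := by nlinarith
  have hb := dist_P_le hMy hR1 hR2
  rw [Real.dist_eq]
  have hε2 : 0 < 20 / ε := by positivity
  have h3 : 10 / R ≤ 10 / (20 / ε) := div_le_div_of_nonneg_left (by norm_num) hε2 h2
  refine lt_of_le_of_lt hb (lt_of_le_of_lt h3 ?_)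
  rw [div_div_eq_mul_div]
  linarith

lemma unif_Q {K : Set ℝ} (hK : IsCompact K) :
    TendstoUniformlyOn (fun R y => Qq y R) Gg atTop K := by
  obtain ⟨M, hM⟩ := hK.isBounded.subset_closedBall 0
  have hM' : ∀ y ∈ K, |y| ≤ M := by
    intro y hy
    have := hM hy
    rwa [Metric.mem_closedBall, Real.dist_eq, sub_zero] at this
  rw [Metric.tendstoUniformlyOn_iff]
  intro ε hε
  filter_upwards [eventually_ge_atTop (max (1 + 2 * M) (20 / ε))] with R hR y hy
  have h1 : 1 + 2 * M ≤ R := le_trans (le_max_left _ _) hR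
  have h2 : 20 / ε ≤ R := le_trans (le_max_right _ _) hR
  have hMy := hM' y hy
  have hM0 : 0 ≤ M := le_trans (abs_nonneg y) hMy
  have hR1 : 1 ≤ R := by linarith
  have hR2 : 2 * M ≤ R ^ 2 := by nlinarith
  have hb := dist_Q_le hMy hR1 hR2
  rw [Real.dist_eq]
  have hε2 : 0 < 20 / ε := by positivity
  have h3 : 10 / R ≤ 10 / (20 / ε) := div_le_div_of_nonneg_left (by norm_num) hε2 h2
  refine lt_of_le_of_lt hb (lt_of_le_of_lt h3 ?_)
  rw [div_div_eq_mul_div]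
  linarith

lemma locunif_P : TendstoLocallyUniformly (fun R y => Pp y R) Ff atTop :=
  tendstoLocallyUniformly_iff_forall_isCompact.2 fun _ hK => unif_P hK

lemma locunif_Q : TendstoLocallyUniformly (fun R y => Qq y R) Gg atTop :=
  tendstoLocallyUniformly_iff_forall_isCompact.2 fun _ hK => unif_Q hK

-- derivative in the parameter y
lemma hasDerivAt_P (y R : ℝ) : HasDerivAt (fun z => Pp z R) (Qq y R) y := by
  have h := intervalIntegral.hasDerivAt_integral_of_dominated_loc_of_deriv_le
    (F := fun z t => Real.cos (t ^ 3 / 3 + z * t))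
    (F' := fun z t => -(t * Real.sin (t ^ 3 / 3 + z * t)))
    (a := (0:ℝ)) (b := R) (x₀ := y) (bound := fun t => |t|)
    (s := Metric.ball y 1) (Metric.ball_mem_nhds y one_pos)
    (Filter.Eventually.of_forall fun z =>
      ((by fun_prop : Continuous fun t : ℝ => Real.cos (t ^ 3 / 3 + z * t)).aestronglyMeasurable))
    (intInt_cos y 0 R)
    ((by fun_prop : Continuous fun t : ℝ =>
        -(t * Real.sin (t ^ 3 / 3 + y * t))).aestronglyMeasurable)
    ?_ ?_ ?_
  · exact h.2
  · apply Filter.Eventually.of_forall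
    intro t _ z _
    rw [Real.norm_eq_abs, abs_neg, abs_mul]
    calc |t| * |Real.sin (t ^ 3 / 3 + z * t)| ≤ |t| * 1 :=
          mul_le_mul_of_nonneg_left (abs_sin_le_one _) (abs_nonneg t)
      _ = |t| := mul_one _
  · exact (continuous_abs).intervalIntegrable 0 R
  · apply Filter.Eventually.of_forall
    intro t _ z _
    have hlin : HasDerivAt (fun z : ℝ => t ^ 3 / 3 + z * t) t z := by
      simpa using ((hasDerivAt_id z).mul_const t).const_add (t ^ 3 / 3)
    have := (Real.hasDerivAt_cos (t ^ 3 / 3 + z * t)).comp z hlin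
    simpa [mul_comm, Function.comp_def] using this

lemma contP (R : ℝ) : Continuous fun z => Pp z R :=
  continuous_iff_continuousAt.2 fun y => (hasDerivAt_P y R).differentiableAt.continuousAt

lemma hasDerivAt_Q (y R : ℝ) :
    HasDerivAt (fun z => Qq z R)
      (∫ t in (0:ℝ)..R, -(t ^ 2 * Real.cos (t ^ 3 / 3 + y * t))) y := by
  have h := intervalIntegral.hasDerivAt_integral_of_dominated_loc_of_deriv_le
    (F := fun z t => -(t * Real.sin (t ^ 3 / 3 + z * t)))
    (F' := fun z t => -(t ^ 2 * Real.cos (t ^ 3 / 3 + z * t)))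
    (a := (0:ℝ)) (b := R) (x₀ := y) (bound := fun t => t ^ 2)
    (s := Metric.ball y 1) (Metric.ball_mem_nhds y one_pos)
    (Filter.Eventually.of_forall fun z =>
      ((by fun_prop : Continuous fun t : ℝ =>
        -(t * Real.sin (t ^ 3 / 3 + z * t))).aestronglyMeasurable))
    (intInt_sin y 0 R)
    ((by fun_prop : Continuous fun t : ℝ =>
        -(t ^ 2 * Real.cos (t ^ 3 / 3 + y * t))).aestronglyMeasurable)
    ?_ ?_ ?_
  · exact h.2
  · apply Filter.Eventually.of_forall
    intro t _ z _
    rw [Real.norm_eq_abs, abs_neg, abs_mul]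
    calc |t ^ 2| * |Real.cos (t ^ 3 / 3 + z * t)| ≤ |t ^ 2| * 1 :=
          mul_le_mul_of_nonneg_left (abs_cos_le_one _) (abs_nonneg _)
      _ = t ^ 2 := by rw [mul_one, abs_of_nonneg (sq_nonneg t)]
  · exact (by fun_prop : Continuous fun t : ℝ => t ^ 2).intervalIntegrable 0 R
  · apply Filter.Eventually.of_forall
    intro t _ z _
    have hlin : HasDerivAt (fun z : ℝ => t ^ 3 / 3 + z * t) t z := by
      simpa using ((hasDerivAt_id z).mul_const t).const_add (t ^ 3 / 3)
    have hs := (Real.hasDerivAt_sin (t ^ 3 / 3 + z * t)).comp z hlin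
    have := (hs.const_mul t).neg
    refine this.congr_deriv ?_
    ring

lemma Icos_id (y R : ℝ) :
    (∫ t in (0:ℝ)..R, -(t ^ 2 * Real.cos (t ^ 3 / 3 + y * t)))
      = y * Pp y R - Real.sin (R ^ 3 / 3 + y * R) := by
  have hftc : (∫ t in (0:ℝ)..R, (t ^ 2 + y) * Real.cos (t ^ 3 / 3 + y * t))
      = Real.sin (R ^ 3 / 3 + y * R) := by
    have := integral_eq_sub_of_hasDerivAt (f := fun t : ℝ => Real.sin (t ^ 3 / 3 + y * t))
      (fun t _ => hasDerivAt_sinphi y t)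
      ((by fun_prop : Continuous fun t : ℝ =>
        (t ^ 2 + y) * Real.cos (t ^ 3 / 3 + y * t)).intervalIntegrable 0 R)
    simpa using this
  have hsplit : (∫ t in (0:ℝ)..R, -(t ^ 2 * Real.cos (t ^ 3 / 3 + y * t)))
      = (∫ t in (0:ℝ)..R, y * Real.cos (t ^ 3 / 3 + y * t))
        - ∫ t in (0:ℝ)..R, (t ^ 2 + y) * Real.cos (t ^ 3 / 3 + y * t) := by
    rw [← intervalIntegral.integral_sub
      ((by fun_prop : Continuous fun t : ℝ =>
        y * Real.cos (t ^ 3 / 3 + y * t)).intervalIntegrable 0 R)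
      ((by fun_prop : Continuous fun t : ℝ =>
        (t ^ 2 + y) * Real.cos (t ^ 3 / 3 + y * t)).intervalIntegrable 0 R)]
    apply integral_congr
    intro t _
    ring
  rw [hsplit, hftc, intervalIntegral.integral_const_mul]
  rfl

lemma hasDerivAt_Q' (y R : ℝ) :
    HasDerivAt (fun z => Qq z R) (y * Pp y R - Real.sin (R ^ 3 / 3 + y * R)) y := by
  have := hasDerivAt_Q y R
  rwa [Icos_id] at this

lemma contQ (R : ℝ) : Continuous fun z => Qq z R :=
  continuous_iff_continuousAt.2 fun y => (hasDerivAt_Q y R).differentiableAt.continuousAt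

lemma contFf : Continuous Ff :=
  locunif_P.continuous (Filter.Eventually.of_forall contP).frequently

lemma hasDerivAt_Ff (y : ℝ) : HasDerivAt Ff (Gg y) y := by
  refine hasDerivAt_of_tendstoLocallyUniformlyOn isOpen_univ
    (locunif_Q.tendstoLocallyUniformlyOn) ?_ (fun x _ => tendsto_P x) (Set.mem_univ y)
  exact Filter.Eventually.of_forall fun R x _ => hasDerivAt_P x R

lemma contsFf : Continuous fun s : ℝ => s * Ff s := continuous_id.mul contFf

lemma Qq_rep (u R : ℝ) (hR : R ≠ 0) :
    Qq u R - Qq 0 R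
      = (∫ s in (0:ℝ)..u, s * Pp s R) - ∫ s in (0:ℝ)..u, Real.sin (R ^ 3 / 3 + s * R) := by
  have hint1 : IntervalIntegrable (fun s : ℝ => s * Pp s R) volume 0 u :=
    (continuous_id.mul (contP R)).intervalIntegrable 0 u
  have hint2 : IntervalIntegrable (fun s : ℝ => Real.sin (R ^ 3 / 3 + s * R)) volume 0 u :=
    (by fun_prop : Continuous fun s : ℝ => Real.sin (R ^ 3 / 3 + s * R)).intervalIntegrable 0 u
  have hftc := integral_eq_sub_of_hasDerivAt (f := fun s => Qq s R)
    (f' := fun s => s * Pp s R - Real.sin (R ^ 3 / 3 + s * R)) (a := (0:ℝ)) (b := u)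
    (fun s _ => hasDerivAt_Q' s R) (hint1.sub hint2)
  rw [intervalIntegral.integral_sub hint1 hint2] at hftc
  linarith [hftc]

lemma sin_int_bound (u R : ℝ) (hR : 1 ≤ R) :
    |∫ s in (0:ℝ)..u, Real.sin (R ^ 3 / 3 + s * R)| ≤ 2 / R := by
  have hR0 : (0:ℝ) < R := lt_of_lt_of_le one_pos hR
  have hw : ∀ s ∈ Set.uIcc (0:ℝ) u,
      HasDerivAt (fun s : ℝ => -Real.cos (R ^ 3 / 3 + s * R) / R)
        (Real.sin (R ^ 3 / 3 + s * R)) s := by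
    intro s _
    have hlin : HasDerivAt (fun s : ℝ => R ^ 3 / 3 + s * R) R s := by
      simpa using ((hasDerivAt_id s).mul_const R).const_add (R ^ 3 / 3)
    have := (((Real.hasDerivAt_cos (R ^ 3 / 3 + s * R)).comp s hlin).neg).div_const R
    refine this.congr_deriv ?_
    field_simp
  have hint : IntervalIntegrable (fun s : ℝ => Real.sin (R ^ 3 / 3 + s * R)) volume 0 u :=
    (by fun_prop : Continuous fun s : ℝ => Real.sin (R ^ 3 / 3 + s * R)).intervalIntegrable 0 u
  have hv := integral_eq_sub_of_hasDerivAt hw hint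
  rw [hv]
  have h1 : (-Real.cos (R ^ 3 / 3 + u * R) / R) - (-Real.cos (R ^ 3 / 3 + 0 * R) / R)
      = (Real.cos (R ^ 3 / 3 + 0 * R) - Real.cos (R ^ 3 / 3 + u * R)) / R := by ring
  rw [h1, abs_div, abs_of_pos hR0]
  have hnum : |Real.cos (R ^ 3 / 3 + 0 * R) - Real.cos (R ^ 3 / 3 + u * R)| ≤ 2 := by
    calc |Real.cos (R ^ 3 / 3 + 0 * R) - Real.cos (R ^ 3 / 3 + u * R)|
        ≤ |Real.cos (R ^ 3 / 3 + 0 * R)| + |Real.cos (R ^ 3 / 3 + u * R)| := abs_sub _ _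
      _ ≤ 1 + 1 := add_le_add (abs_cos_le_one _) (abs_cos_le_one _)
      _ = 2 := by norm_num
  exact (div_le_div_iff_of_pos_right hR0).2 hnum

lemma tendsto_two_div : Tendsto (fun R : ℝ => 2 / R) atTop (𝓝 0) := by
  have := tendsto_inv_atTop_zero.const_mul (2:ℝ)
  simpa [div_eq_mul_inv] using this

lemma tendsto_sin_int (u : ℝ) :
    Tendsto (fun R => ∫ s in (0:ℝ)..u, Real.sin (R ^ 3 / 3 + s * R)) atTop (𝓝 0) := by
  apply squeeze_zero_norm' ?_ tendsto_two_div
  filter_upwards [eventually_ge_atTop (1:ℝ)] with R hR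
  exact sin_int_bound u R hR

lemma tendsto_int_sP (u : ℝ) :
    Tendsto (fun R => ∫ s in (0:ℝ)..u, s * Pp s R) atTop
      (𝓝 (∫ s in (0:ℝ)..u, s * Ff s)) := by
  have hdiff : Tendsto
      (fun R => (∫ s in (0:ℝ)..u, s * Pp s R) - ∫ s in (0:ℝ)..u, s * Ff s) atTop (𝓝 0) := by
    have hg0 : Tendsto (fun R : ℝ => |u| * (10 / R) * |u|) atTop (𝓝 0) := by
      have h9 : Tendsto (fun R : ℝ => |u| * (10 / R) * |u|) atTop (𝓝 (|u| * 0 * |u|)) := by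
        apply Tendsto.mul_const
        apply Tendsto.const_mul
        have := tendsto_inv_atTop_zero.const_mul (10:ℝ)
        simpa using this.congr fun R => (div_eq_mul_inv _ _).symm
      simpa using h9
    apply squeeze_zero_norm' ?_ hg0
    · filter_upwards [eventually_ge_atTop (max 1 (1 + 2 * |u|))] with R hR
      have hR1 : 1 ≤ R := le_trans (le_max_left _ _) hR
      have hR2' : 1 + 2 * |u| ≤ R := le_trans (le_max_right _ _) hR
      have hR2 : 2 * |u| ≤ R ^ 2 := by nlinarith [abs_nonneg u]
      have hc1 : Continuous fun s : ℝ => s * Pp s R := continuous_id.mul (contP R)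
      have heq : (∫ s in (0:ℝ)..u, s * Pp s R) - (∫ s in (0:ℝ)..u, s * Ff s)
          = ∫ s in (0:ℝ)..u, s * Pp s R - s * Ff s := by
        rw [intervalIntegral.integral_sub
          (hc1.intervalIntegrable 0 u)
          (contsFf.intervalIntegrable 0 u)]
      rw [heq]
      have hb := intervalIntegral.norm_integral_le_of_norm_le_const
        (C := |u| * (10 / R)) (f := fun s => s * Pp s R - s * Ff s) (a := (0:ℝ)) (b := u) ?_
      · simpa [abs_of_nonneg] using hb
      · intro s hs
        have hsu : |s| ≤ |u| := by
          rw [Set.mem_uIoc] at hs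
          rcases hs with h | h
          · rw [abs_of_pos h.1, abs_of_nonneg (le_trans h.1.le h.2)]; exact h.2
          · have hu0 : u < 0 := lt_of_lt_of_le h.1 h.2
            rw [abs_of_nonpos h.2, abs_of_neg hu0]
            linarith [h.1]
        have hds := dist_P_le (M := |u|) hsu hR1 hR2
        calc ‖s * Pp s R - s * Ff s‖ = |s| * |Pp s R - Ff s| := by
              rw [← abs_mul]; congr 1; ring
          _ ≤ |u| * (10 / R) := by
              apply mul_le_mul hsu ?_ (abs_nonneg _) (abs_nonneg u)
              rw [← abs_neg]
              simpa [neg_sub] using hds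
  have h2 := hdiff.add_const (∫ s in (0:ℝ)..u, s * Ff s)
  simpa using h2

lemma Gg_rep (u : ℝ) : Gg u = Gg 0 + ∫ s in (0:ℝ)..u, s * Ff s := by
  have hL : Tendsto (fun R => Qq u R - Qq 0 R) atTop (𝓝 (Gg u - Gg 0)) :=
    (tendsto_Q u).sub (tendsto_Q 0)
  have hR : Tendsto (fun R => Qq u R - Qq 0 R) atTop
      (𝓝 ((∫ s in (0:ℝ)..u, s * Ff s) - 0)) := by
    apply Filter.Tendsto.congr' ?_ ((tendsto_int_sP u).sub (tendsto_sin_int u))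
    filter_upwards [eventually_gt_atTop (0:ℝ)] with R hR0
    exact (Qq_rep u R (ne_of_gt hR0)).symm
  have := tendsto_nhds_unique hL hR
  rw [sub_zero] at this
  linarith [this]

lemma hasDerivAt_Gg (u : ℝ) : HasDerivAt Gg (u * Ff u) u := by
  have hfun : Gg = fun u => Gg 0 + ∫ s in (0:ℝ)..u, s * Ff s := funext Gg_rep
  rw [hfun]
  have h := intervalIntegral.integral_hasDerivAt_right
    (contsFf.intervalIntegrable 0 u)
    (contsFf.stronglyMeasurableAtFilter volume (𝓝 u))
    contsFf.continuousAt
  exact h.const_add (Gg 0)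

lemma Ai_eq (u : ℝ) : Ai u = (1 / Real.pi) * Ff u := rfl

lemma hasDerivAt_Ai (u : ℝ) : HasDerivAt Ai ((1 / Real.pi) * Gg u) u := by
  have : HasDerivAt (fun y => (1 / Real.pi) * Ff y) ((1 / Real.pi) * Gg u) u :=
    (hasDerivAt_Ff u).const_mul (1 / Real.pi)
  exact this

lemma deriv_Ai_eq : deriv Ai = fun u => (1 / Real.pi) * Gg u :=
  funext fun u => (hasDerivAt_Ai u).deriv

lemma hasDerivAt_deriv_Ai (u : ℝ) :
    HasDerivAt (deriv Ai) ((1 / Real.pi) * (u * Ff u)) u := by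
  rw [deriv_Ai_eq]
  exact (hasDerivAt_Gg u).const_mul (1 / Real.pi)

theorem airy_differential_equation :
    Differentiable ℝ Ai ∧ Differentiable ℝ (deriv Ai) ∧
      ∀ u : ℝ, deriv (deriv Ai) u = u * Ai u := by
  refine ⟨fun u => (hasDerivAt_Ai u).differentiableAt,
    fun u => (hasDerivAt_deriv_Ai u).differentiableAt, fun u => ?_⟩
  rw [(hasDerivAt_deriv_Ai u).deriv, Ai_eq]
  ring
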